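/- Let H be a Hilbert space, A a closed operator and S a bounded projection on H such that A + S has a bounded inverse. Then A has a bounded inverse if and only if a := S − S(A+S)^{−1}S has a bounded inverse as an operator on SH, and in that case A^{−1} = (A+S)^{−1} + (A+S)^{−1} S a^{−1} S (A+S)^{−1}. -/
import Mathlib


/-- Jensen–Nenciu inversion lemma: let `A` be a closed (possibly unbounded) operator and `S`
a bounded projection on a Hilbert space `H` such that `A + S` has a bounded inverse `B`.
Then `A` has a bounded inverse iff `a := S − S(A+S)⁻¹S` has a bounded inverse on `SH`, and
in that case `A⁻¹ = (A+S)⁻¹ + (A+S)⁻¹ S a⁻¹ S (A+S)⁻¹`. -/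
theorem stmt_12 {H : Type*} [NormedAddCommGroup H] [InnerProductSpace ℂ H] [CompleteSpace H]
    (A : H →ₗ.[ℂ] H) (hAclosed : IsClosed (A.graph : Set (H × H)))
    (S : H →L[ℂ] H) (hS : ∀ x, S (S x) = S x)
    (B : H →L[ℂ] H)
    (hBA : ∀ x : A.domain, B (A x + S x) = (x : H))
    (hAB : ∀ y : H, ∃ hy : B y ∈ A.domain, A ⟨B y, hy⟩ + S (B y) = y) :
    ((∃ R : H →L[ℂ] H, (∀ x : A.domain, R (A x) = (x : H)) ∧
        ∀ y : H, ∃ hy : R y ∈ A.domain, A ⟨R y, hy⟩ = y)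
      ↔ ∃ b : H →L[ℂ] H, (∀ y, b y = S (b (S y))) ∧
          (∀ y, b (S y - S (B (S y))) = S y) ∧
          (∀ y, S (b (S y)) - S (B (S (b (S y)))) = S y))
    ∧ ∀ b : H →L[ℂ] H, (∀ y, b y = S (b (S y))) →
        (∀ y, b (S y - S (B (S y))) = S y) →
        (∀ y, S (b (S y)) - S (B (S (b (S y)))) = S y) →
        (∀ x : A.domain, B (A x) + B (S (b (S (B (A x))))) = (x : H)) ∧
        ∀ y : H, ∃ hy : B y + B (S (b (S (B y)))) ∈ A.domain,
          A ⟨B y + B (S (b (S (B y)))), hy⟩ = y := by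
  have main : ∀ b : H →L[ℂ] H, (∀ y, b y = S (b (S y))) →
        (∀ y, b (S y - S (B (S y))) = S y) →
        (∀ y, S (b (S y)) - S (B (S (b (S y)))) = S y) →
        (∀ x : A.domain, B (A x) + B (S (b (S (B (A x))))) = (x : H)) ∧
        ∀ y : H, ∃ hy : B y + B (S (b (S (B y)))) ∈ A.domain,
          A ⟨B y + B (S (b (S (B y)))), hy⟩ = y := by
    intro b hb1 hb2 hb3
    constructor
    · intro x
      have e1 : B (A x) = (x : H) - B (S x) := by
        have h := hBA x
        rw [map_add] at h
        exact eq_sub_of_add_eq h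
      have e2 : S (B (A x)) = S (x : H) - S (B (S (x : H))) := by
        rw [e1, map_sub]
      rw [e2, hb2 (x : H), e1, hS]
      abel
    · intro y
      obtain ⟨h1, e1⟩ := hAB y
      set w : H := S (b (S (B y))) with hw
      obtain ⟨h2, e2⟩ := hAB w
      refine ⟨A.domain.add_mem h1 h2, ?_⟩
      have key : w - S (B w) = S (B y) := by
        have h := hb3 (B y)
        simpa [hw] using h
      have split : A ⟨B y + B w, A.domain.add_mem h1 h2⟩
          = A ⟨B y, h1⟩ + A ⟨B w, h2⟩ := by
        have : (⟨B y + B w, A.domain.add_mem h1 h2⟩ : A.domain)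
            = ⟨B y, h1⟩ + ⟨B w, h2⟩ := rfl
        rw [this, A.map_add]
      rw [split, eq_sub_of_add_eq e1, eq_sub_of_add_eq e2]
      have : S (B w) = w - S (B y) := by rw [← key]; abel
      rw [this]
      abel
  refine ⟨⟨?_, ?_⟩, main⟩
  · rintro ⟨R, hR1, hR2⟩
    refine ⟨S.comp ((ContinuousLinearMap.id ℂ H + R).comp S), ?_, ?_, ?_⟩
    · intro y
      simp [hS]
    · intro y
      obtain ⟨hy, h⟩ := hAB (S y)
      have hAu : A ⟨B (S y), hy⟩ = S y - S (B (S y)) := eq_sub_of_add_eq h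
      have hRu : R (S y - S (B (S y))) = B (S y) := by
        rw [← hAu]; exact hR1 ⟨B (S y), hy⟩
      have hSu : S (S y - S (B (S y))) = S y - S (B (S y)) := by
        rw [map_sub, hS, hS]
      show S ((ContinuousLinearMap.id ℂ H + R) (S (S y - S (B (S y))))) = S y
      rw [hSu, ContinuousLinearMap.add_apply, ContinuousLinearMap.id_apply, hRu,
        map_add, map_sub, hS, hS]
      abel
    · intro y
      obtain ⟨hy, h⟩ := hR2 (S y)
      have key : B (S y) + B (S (R (S y))) = R (S y) := by
        have h2 := hBA ⟨R (S y), hy⟩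
        rw [h] at h2
        rw [← map_add]
        exact h2
      simp only [ContinuousLinearMap.comp_apply, ContinuousLinearMap.add_apply,
        ContinuousLinearMap.id_apply, hS, map_add]
      have k2 : S (B (S y)) + S (B (S (R (S y)))) = S (R (S y)) := by
        rw [← map_add, key]
      rw [k2]
      abel
  · rintro ⟨b, hb1, hb2, hb3⟩
    obtain ⟨m1, m2⟩ := main b hb1 hb2 hb3
    refine ⟨B + ((((B.comp S).comp b).comp S).comp B), ?_, ?_⟩
    · intro x
      simpa using m1 x
    · intro y
      obtain ⟨hy, h⟩ := m2 y
      exact ⟨hy, h⟩
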